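/- Newton–Leibniz formula for the AB model: for 0 < α < 1 and differentiable f on [a,b] with f' ∈ L¹(a,b), one has ^{AB}I^α_{a+}(^{ABC}D^α_{a+} f)(t) = f(t) - f(a). -/

import Mathlib

open Real MeasureTheory Filter

/-- Mittag-Leffler function `E_α(z) = Σ z^n / Γ(αn+1)`. -/
noncomputable def mittagLeffler (α z : ℝ) : ℝ :=
  ∑' n : ℕ, z ^ n / Real.Gamma (α * n + 1)

/-- Riemann–Liouville fractional integral of order `β ≥ 0` with base point `a`
(the identity for `β = 0`). -/
noncomputable def RL (a β : ℝ) (f : ℝ → ℝ) (t : ℝ) : ℝ :=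
  if β = 0 then f t
  else (1 / Real.Gamma β) * ∫ τ in a..t, (t - τ) ^ (β - 1) * f τ

/-- ABR (Atangana–Baleanu, Riemann–Liouville type) fractional derivative,
with normalisation value `B = B(α)`. -/
noncomputable def ABR (B a α : ℝ) (f : ℝ → ℝ) (t : ℝ) : ℝ :=
  (B / (1 - α)) *
    deriv (fun s => ∫ x in a..s, f x * mittagLeffler α (-α / (1 - α) * (s - x) ^ α)) t

/-- ABC (Atangana–Baleanu, Caputo type) fractional derivative. -/
noncomputable def ABC (B a α : ℝ) (f : ℝ → ℝ) (t : ℝ) : ℝ :=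
  (B / (1 - α)) *
    ∫ x in a..t, deriv f x * mittagLeffler α (-α / (1 - α) * (t - x) ^ α)

/-- AB fractional integral. -/
noncomputable def ABI (B a α : ℝ) (f : ℝ → ℝ) (t : ℝ) : ℝ :=
  ((1 - α) / B) * f t + (α / B) * RL a α f t



section AuxiliaryLemmas

open Set

lemma Gamma_ge_inv_exp {x : ℝ} (hx : 1 ≤ x) : Real.exp (-1) ≤ Real.Gamma x := by
  rw [Real.Gamma_eq_integral (by linarith)]
  rw [show Real.exp (-1) = ∫ t in Ioi (1:ℝ), Real.exp (-t) from (integral_exp_neg_Ioi 1).symm]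
  have hconv : IntegrableOn (fun t => Real.exp (-t) * t ^ (x - 1)) (Ioi 0) :=
    Real.GammaIntegral_convergent (by linarith)
  have hsub : Ioi (1:ℝ) ⊆ Ioi 0 := fun t ht => mem_Ioi.mpr (lt_trans one_pos (mem_Ioi.mp ht))
  have hexp : IntegrableOn (fun t => Real.exp (-t)) (Ioi (1:ℝ)) := by
    simpa using exp_neg_integrableOn_Ioi 1 one_pos
  calc ∫ t in Ioi (1:ℝ), Real.exp (-t)
      ≤ ∫ t in Ioi (1:ℝ), Real.exp (-t) * t ^ (x - 1) := by
        apply setIntegral_mono_on hexp (hconv.mono_set hsub) measurableSet_Ioi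
        intro t ht
        have h1t : (1:ℝ) ≤ t := le_of_lt ht
        nth_rewrite 1 [← mul_one (Real.exp (-t))]
        gcongr
        exact Real.one_le_rpow h1t (by linarith)
    _ ≤ ∫ t in Ioi (0:ℝ), Real.exp (-t) * t ^ (x - 1) := by
        apply setIntegral_mono_set hconv ?_ (HasSubset.Subset.eventuallyLE hsub)
        filter_upwards [self_mem_ae_restrict (measurableSet_Ioi : MeasurableSet (Ioi (0:ℝ)))]
          with t ht
        exact mul_nonneg (Real.exp_pos _).le (Real.rpow_nonneg (le_of_lt ht) _)

lemma Gamma_ge_factorial {k : ℕ} {x : ℝ} (hk : (k:ℝ) ≤ x) :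
    Real.exp (-1) * (Nat.factorial k : ℝ) ≤ Real.Gamma (x + 1) := by
  induction k generalizing x with
  | zero =>
      simpa using Gamma_ge_inv_exp (by linarith [hk] : 1 ≤ x + 1)
  | succ k ih =>
      have hx0 : (0:ℝ) < x := lt_of_lt_of_le (by positivity) hk
      rw [Real.Gamma_add_one (ne_of_gt hx0)]
      have h1 : Real.exp (-1) * (Nat.factorial k : ℝ) ≤ Real.Gamma ((x - 1) + 1) := by
        apply ih; push_cast at hk ⊢; linarith
      rw [sub_add_cancel] at h1
      have hgpos : 0 ≤ Real.Gamma x := (Real.Gamma_pos_of_pos hx0).le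
      calc Real.exp (-1) * (Nat.factorial (k+1) : ℝ)
          = ((k:ℝ)+1) * (Real.exp (-1) * (Nat.factorial k : ℝ)) := by
            push_cast [Nat.factorial_succ]; ring
        _ ≤ x * Real.Gamma x := by
            apply mul_le_mul ?_ h1 (by positivity) (by linarith)
            push_cast at hk ⊢; linarith

lemma factorial_ge_geom (q N : ℕ) (hqN : q ≤ N) :
    ∀ m, N ≤ m → Nat.factorial N * q ^ (m - N) ≤ Nat.factorial m := by
  intro m hm
  induction m with
  | zero => simp [Nat.le_zero.mp hm]
  | succ m ih =>
      rcases Nat.lt_or_ge N (m+1) with h | h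
      · have hNm : N ≤ m := Nat.lt_succ_iff.mp h
        have h1 := ih hNm
        have hsub : m + 1 - N = (m - N) + 1 := by omega
        rw [hsub, pow_succ, ← mul_assoc]
        calc Nat.factorial N * q ^ (m - N) * q ≤ Nat.factorial m * q :=
              Nat.mul_le_mul_right q h1
          _ ≤ Nat.factorial m * (m+1) := Nat.mul_le_mul_left _ (by omega)
          _ = Nat.factorial (m+1) := by rw [Nat.factorial_succ]; ring
      · have : N = m + 1 := le_antisymm hm h
        subst this; simp

lemma master_summable {α r : ℝ} (hα : 0 < α) (hr : 0 ≤ r) :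
    Summable (fun n : ℕ => r ^ n / (Nat.factorial (Nat.floor (α * n)) : ℝ)) := by
  set q : ℕ := Nat.ceil ((r+1) ^ (1/α)) + 1 with hq_def
  have hq1 : 1 ≤ q := Nat.le_add_left 1 _
  have hq0 : (0:ℝ) < q := by positivity
  have hq1R : (1:ℝ) ≤ (q:ℝ) := by exact_mod_cast hq1
  have hqge : (r+1) ^ (1/α) ≤ (q:ℝ) := le_trans (Nat.le_ceil _) (by exact_mod_cast Nat.le_succ _)
  have hqα : r + 1 ≤ (q:ℝ) ^ α := by
    calc r + 1 = ((r+1) ^ (1/α)) ^ α := by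
          rw [← Real.rpow_mul (by linarith), one_div, inv_mul_cancel₀ (ne_of_gt hα),
            Real.rpow_one]
      _ ≤ (q:ℝ) ^ α := Real.rpow_le_rpow (Real.rpow_nonneg (by linarith) _) hqge hα.le
  have hqαpos : (0:ℝ) < (q:ℝ) ^ α := Real.rpow_pos_of_pos hq0 α
  set ρ : ℝ := r / (q:ℝ) ^ α with hρ_def
  have hρ0 : 0 ≤ ρ := div_nonneg hr hqαpos.le
  have hρ1 : ρ < 1 := (div_lt_one hqαpos).mpr (by linarith)
  apply summable_of_isBigO_nat (summable_geometric_of_lt_one hρ0 hρ1)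
  rw [Asymptotics.isBigO_iff]
  refine ⟨(q:ℝ) ^ (q+1) / (Nat.factorial q : ℝ), ?_⟩
  have hev : ∀ᶠ (n:ℕ) in atTop, (q:ℝ) ≤ α * n := by
    have h1 : Tendsto (fun n : ℕ => α * n) atTop atTop :=
      (tendsto_natCast_atTop_atTop (R := ℝ)).const_mul_atTop hα
    exact h1.eventually_ge_atTop _
  filter_upwards [hev] with n hn
  set m : ℕ := Nat.floor (α * n) with hm_def
  have hαn0 : (0:ℝ) ≤ α * n := by positivity
  have hqm : q ≤ m := Nat.le_floor hn
  have hfact : (Nat.factorial q : ℝ) * (q:ℝ) ^ (m - q) ≤ (Nat.factorial m : ℝ) := by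
    exact_mod_cast factorial_ge_geom q q le_rfl m hqm
  have hpow : (q:ℝ) ^ (m - q) = (q:ℝ) ^ m / (q:ℝ) ^ q := by
    rw [eq_div_iff (by positivity), ← pow_add]; congr 1; omega
  -- (q:ℝ)^m ≥ (q^α)^n / q
  have hm_gt : α * n - 1 < (m:ℝ) := by
    have := Nat.lt_floor_add_one (α * n); linarith [Nat.sub_one_lt_floor (α * n)]
  have hrpow : ((q:ℝ) ^ α) ^ n / (q:ℝ) ≤ (q:ℝ) ^ m := by
    have h1 : ((q:ℝ) ^ α) ^ n / (q:ℝ) = (q:ℝ) ^ (α * n - 1) := by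
      rw [Real.rpow_sub hq0, Real.rpow_one, ← Real.rpow_natCast ((q:ℝ) ^ α) n,
        ← Real.rpow_mul hq0.le]
    have h2 : (q:ℝ) ^ (α * n - 1) ≤ (q:ℝ) ^ (m:ℝ) :=
      Real.rpow_le_rpow_of_exponent_le hq1R hm_gt.le
    rw [h1]; rwa [Real.rpow_natCast] at h2
  have hfm_pos : (0:ℝ) < (Nat.factorial m : ℝ) := by positivity
  have key : r ^ n / (Nat.factorial m : ℝ)
      ≤ (q:ℝ) ^ (q+1) / (Nat.factorial q : ℝ) * ρ ^ n := by
    have hlow : (Nat.factorial q : ℝ) * (((q:ℝ)^α) ^ n / ((q:ℝ) ^ (q+1)))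
        ≤ (Nat.factorial m : ℝ) := by
      calc (Nat.factorial q : ℝ) * (((q:ℝ)^α) ^ n / ((q:ℝ) ^ (q+1)))
          = (Nat.factorial q : ℝ) * ((((q:ℝ)^α) ^ n / q) / (q:ℝ) ^ q) := by
            rw [pow_succ]; ring
        _ ≤ (Nat.factorial q : ℝ) * ((q:ℝ) ^ m / (q:ℝ) ^ q) := by
            gcongr
        _ = (Nat.factorial q : ℝ) * (q:ℝ) ^ (m - q) := by rw [hpow]
        _ ≤ _ := hfact
    have hD : (0:ℝ) < (Nat.factorial q : ℝ) * (((q:ℝ)^α) ^ n / ((q:ℝ) ^ (q+1))) := by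
      positivity
    calc r ^ n / (Nat.factorial m : ℝ)
        ≤ r ^ n / ((Nat.factorial q : ℝ) * (((q:ℝ)^α) ^ n / ((q:ℝ) ^ (q+1)))) := by
          gcongr
      _ = (q:ℝ) ^ (q+1) / (Nat.factorial q : ℝ) * ρ ^ n := by
          rw [hρ_def, div_pow]
          field_simp
  calc ‖r ^ n / (Nat.factorial m : ℝ)‖ = r ^ n / (Nat.factorial m : ℝ) := by
        rw [Real.norm_of_nonneg (by positivity)]
    _ ≤ (q:ℝ) ^ (q+1) / (Nat.factorial q : ℝ) * ρ ^ n := key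
    _ ≤ _ := by
        rw [Real.norm_of_nonneg (by positivity : (0:ℝ) ≤ ρ ^ n)]

lemma gamma_summable {α β r : ℝ} (hα : 0 < α) (hβ : 0 ≤ β) (hr : 0 ≤ r) :
    Summable (fun n : ℕ => r ^ n / Real.Gamma (α * n + β + 1)) := by
  refine Summable.of_nonneg_of_le ?_ ?_ ((master_summable hα hr).mul_left (Real.exp 1))
  · intro n
    have hpos : 0 < Real.Gamma (α * n + β + 1) :=
      Real.Gamma_pos_of_pos (by positivity)
    positivity
  · intro n
    have hαn0 : (0:ℝ) ≤ α * n := by positivity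
    have hfl : (Nat.floor (α * n) : ℝ) ≤ α * n + β :=
      le_trans (Nat.floor_le hαn0) (by linarith)
    have hG : Real.exp (-1) * (Nat.factorial (Nat.floor (α * n)) : ℝ)
        ≤ Real.Gamma (α * n + β + 1) := Gamma_ge_factorial hfl
    have hGpos : (0:ℝ) < Real.exp (-1) * (Nat.factorial (Nat.floor (α * n)) : ℝ) := by
      positivity
    calc r ^ n / Real.Gamma (α * n + β + 1)
        ≤ r ^ n / (Real.exp (-1) * (Nat.factorial (Nat.floor (α * n)) : ℝ)) := by
          gcongr
      _ = Real.exp 1 * (r ^ n / (Nat.factorial (Nat.floor (α * n)) : ℝ)) := by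
          rw [Real.exp_neg]; field_simp

lemma ML_summable {α r : ℝ} (hα : 0 < α) (hr : 0 ≤ r) :
    Summable (fun n : ℕ => r ^ n / Real.Gamma (α * n + 1)) := by
  simpa using gamma_summable hα le_rfl hr

lemma ML_continuous {α : ℝ} (hα : 0 < α) : Continuous (mittagLeffler α) := by
  rw [continuous_iff_continuousAt]
  intro z
  have hzR : |z| < |z| + 1 := by linarith
  have hR : (0:ℝ) ≤ |z| + 1 := by positivity
  have hcont : ContinuousOn (mittagLeffler α) (Icc (-(|z|+1)) (|z|+1)) := by
    have : ∀ x, mittagLeffler α x = ∑' n : ℕ, x ^ n / Real.Gamma (α * n + 1) := fun _ => rfl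
    apply continuousOn_tsum (u := fun n : ℕ => (|z|+1) ^ n / Real.Gamma (α * n + 1))
    · intro i
      exact ((continuous_pow i).div_const _).continuousOn
    · exact ML_summable hα hR
    · intro n x hx
      have hΓ : 0 < Real.Gamma (α * n + 1) := Real.Gamma_pos_of_pos (by positivity)
      rw [norm_div, Real.norm_of_nonneg hΓ.le, norm_pow]
      gcongr
      exact abs_le.mpr ⟨hx.1, hx.2⟩
  exact hcont.continuousAt (Icc_mem_nhds (by cases abs_lt.mp hzR; linarith) (abs_lt.mp hzR).2)

lemma ML_zero {α : ℝ} (hα : 0 < α) : mittagLeffler α 0 = 1 := by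
  unfold mittagLeffler
  rw [tsum_eq_single 0 (fun n hn => by
    rw [zero_pow hn]; simp)]
  norm_num [Real.Gamma_one]

lemma beta_rpow {p q u : ℝ} (hp : 0 < p) (hq : 0 < q) (hu : 0 < u) :
    ∫ s in (0:ℝ)..u, s ^ (p - 1) * (u - s) ^ (q - 1)
      = u ^ (p + q - 1) * (Real.Gamma p * Real.Gamma q / Real.Gamma (p + q)) := by
  have h1 := Complex.betaIntegral_scaled (p:ℂ) (q:ℂ) hu
  have hpre : (0:ℝ) < (Complex.ofReal p).re := by simpa using hp
  have hqre : (0:ℝ) < (Complex.ofReal q).re := by simpa using hq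
  have h2 := Complex.Gamma_mul_Gamma_eq_betaIntegral hpre hqre
  have hΓpq : Complex.Gamma ((p:ℂ) + q) ≠ 0 := by
    rw [show ((p:ℂ) + q) = ((p + q : ℝ) : ℂ) by push_cast; ring, Complex.Gamma_ofReal]
    exact_mod_cast (Real.Gamma_pos_of_pos (by linarith)).ne'
  have hbeta : Complex.betaIntegral p q
      = Complex.Gamma p * Complex.Gamma q / Complex.Gamma ((p:ℂ) + q) := by
    rw [eq_div_iff hΓpq]
    linear_combination -h2
  have hLHS : ∫ x in (0:ℝ)..u, (x:ℂ) ^ ((p:ℂ) - 1) * ((u:ℂ) - x) ^ ((q:ℂ) - 1)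
      = ((∫ s in (0:ℝ)..u, s ^ (p - 1) * (u - s) ^ (q - 1) : ℝ) : ℂ) := by
    rw [← intervalIntegral.integral_ofReal]
    apply intervalIntegral.integral_congr
    intro x hx
    rw [uIcc_of_le hu.le] at hx
    show (x:ℂ) ^ ((p:ℂ) - 1) * ((u:ℂ) - x) ^ ((q:ℂ) - 1)
        = ((x ^ (p - 1) * (u - x) ^ (q - 1) : ℝ) : ℂ)
    rw [Complex.ofReal_mul, Complex.ofReal_cpow hx.1, Complex.ofReal_cpow (by
      simpa using hx.2 : (0:ℝ) ≤ u - x)]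
    push_cast
    ring_nf
  rw [hLHS, hbeta] at h1
  have : ((∫ s in (0:ℝ)..u, s ^ (p - 1) * (u - s) ^ (q - 1) : ℝ) : ℂ)
      = ((u ^ (p + q - 1) * (Real.Gamma p * Real.Gamma q / Real.Gamma (p + q)) : ℝ) : ℂ) := by
    rw [h1]
    rw [show ((p:ℂ) + q - 1) = ((p + q - 1 : ℝ) : ℂ) by push_cast; ring,
      ← Complex.ofReal_cpow hu.le]
    rw [show ((p:ℂ) + q) = ((p + q : ℝ) : ℂ) by push_cast; ring]
    rw [Complex.Gamma_ofReal, Complex.Gamma_ofReal, Complex.Gamma_ofReal]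
    push_cast
    ring
  exact_mod_cast this

lemma ML_comp {α c u : ℝ} (hu : 0 ≤ u) :
    mittagLeffler α (c * u ^ α)
      = ∑' n : ℕ, c ^ n * u ^ (α * (n:ℝ)) / Real.Gamma (α * n + 1) := by
  unfold mittagLeffler
  apply tsum_congr
  intro n
  rw [mul_pow, ← Real.rpow_natCast (u ^ α) n, ← Real.rpow_mul hu]

lemma Fser_summable {α c u : ℝ} (hα : 0 < α) (hu : 0 ≤ u) :
    Summable (fun n : ℕ => c ^ n * u ^ (α * (n:ℝ)) / Real.Gamma (α * n + 1)) := by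
  apply Summable.of_norm
  have heq : ∀ n : ℕ, ‖c ^ n * u ^ (α * (n:ℝ)) / Real.Gamma (α * n + 1)‖
      = (|c| * u ^ α) ^ n / Real.Gamma (α * n + 1) := by
    intro n
    have hΓ : 0 < Real.Gamma (α * n + 1) := Real.Gamma_pos_of_pos (by positivity)
    rw [norm_div, Real.norm_of_nonneg hΓ.le, norm_mul, norm_pow, mul_pow,
      Real.norm_of_nonneg (Real.rpow_nonneg hu _), Real.rpow_mul hu,
      Real.rpow_natCast, Real.norm_eq_abs]
  rw [funext heq]
  exact ML_summable hα (by positivity)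

lemma beta_n {α u : ℝ} (hα : 0 < α) (hu : 0 < u) (n : ℕ) :
    ∫ s in (0:ℝ)..u, s ^ (α * (n:ℝ)) * (u - s) ^ (α - 1)
      = u ^ (α * (n:ℝ) + α) *
        (Real.Gamma (α * n + 1) * Real.Gamma α / Real.Gamma (α * n + α + 1)) := by
  have h := beta_rpow (p := α * (n:ℝ) + 1) (q := α) (by positivity) hα hu
  rw [show α * (n:ℝ) + 1 - 1 = α * (n:ℝ) by ring, show α * (n:ℝ) + 1 + α - 1 = α * (n:ℝ) + α
    by ring, show α * (n:ℝ) + 1 + α = α * (n:ℝ) + α + 1 by ring] at h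
  exact h

lemma ker_integrableOn {α u : ℝ} (hα0 : 0 < α) (hu : 0 < u) :
    IntegrableOn (fun s : ℝ => (u - s) ^ (α - 1)) (Ioc 0 u) := by
  have h1 : IntervalIntegrable (fun y : ℝ => y ^ (α - 1)) volume 0 u :=
    intervalIntegral.intervalIntegrable_rpow' (by linarith)
  have h2 := (h1.comp_sub_left u).symm
  simp only [sub_zero, sub_self] at h2
  exact (intervalIntegrable_iff_integrableOn_Ioc_of_le hu.le).mp h2

lemma betaf_integrableOn {α u : ℝ} (hα0 : 0 < α) (hu : 0 < u) (r : ℝ) (hr : 0 ≤ r) :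
    IntegrableOn (fun s : ℝ => s ^ r * (u - s) ^ (α - 1)) (Ioc 0 u) := by
  apply Integrable.mono ((ker_integrableOn hα0 hu).const_mul (u ^ r))
  · apply Measurable.aestronglyMeasurable
    fun_prop
  · filter_upwards [ae_restrict_mem measurableSet_Ioc] with s hs
    have h1 : 0 ≤ s := hs.1.le
    have h2 : 0 ≤ u - s := by linarith [hs.2]
    rw [Real.norm_of_nonneg (by positivity), Real.norm_of_nonneg (by positivity)]
    exact mul_le_mul_of_nonneg_right (Real.rpow_le_rpow h1 hs.2 hr) (Real.rpow_nonneg h2 _)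

lemma kernel_identity {α u : ℝ} (hα0 : 0 < α) (hα1 : α < 1) (hu : 0 < u) :
    ∫ s in (0:ℝ)..u, (u - s) ^ (α - 1) * mittagLeffler α (-α / (1 - α) * s ^ α)
      = Real.Gamma α * ((1 - α) / α) * (1 - mittagLeffler α (-α / (1 - α) * u ^ α)) := by
  set c : ℝ := -α / (1 - α) with hc
  have h1α : (0:ℝ) < 1 - α := by linarith
  have hcne : c ≠ 0 := by
    rw [hc]; intro h
    rw [div_eq_zero_iff] at h
    rcases h with h | h <;> [linarith [hα0]; linarith]
  set F : ℕ → ℝ → ℝ := fun n s =>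
    (c ^ n / Real.Gamma (α * n + 1)) * (s ^ (α * (n:ℝ)) * (u - s) ^ (α - 1)) with hF
  -- each F n is integrable on Ioc 0 u
  have hFint : ∀ n : ℕ, IntegrableOn (F n) (Ioc 0 u) := fun n =>
    (betaf_integrableOn hα0 hu _ (by positivity)).const_mul _
  -- value of each integral
  have hFval : ∀ n : ℕ, ∫ s in Ioc 0 u, F n s
      = Real.Gamma α * (c ^ n * u ^ (α * (n:ℝ) + α) / Real.Gamma (α * n + α + 1)) := by
    intro n
    have hΓ : 0 < Real.Gamma (α * n + 1) := Real.Gamma_pos_of_pos (by positivity)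
    rw [hF]
    rw [MeasureTheory.integral_const_mul, ← intervalIntegral.integral_of_le hu.le, beta_n hα0 hu]
    field_simp
  -- norms summable
  have hFnorm : Summable (fun n : ℕ => ∫ s in Ioc 0 u, ‖F n s‖) := by
    have heq : ∀ n : ℕ, (∫ s in Ioc 0 u, ‖F n s‖)
        = (Real.Gamma α * u ^ α) * ((|c| * u ^ α) ^ n / Real.Gamma (α * n + α + 1)) := by
      intro n
      have hΓ : 0 < Real.Gamma (α * n + 1) := Real.Gamma_pos_of_pos (by positivity)
      have hnrm : ∀ᵐ s ∂(volume.restrict (Ioc 0 u)), ‖F n s‖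
          = (|c| ^ n / Real.Gamma (α * n + 1)) * (s ^ (α * (n:ℝ)) * (u - s) ^ (α - 1)) := by
        filter_upwards [ae_restrict_mem measurableSet_Ioc] with s hs
        have h1 : 0 ≤ s := hs.1.le
        have h2 : 0 ≤ u - s := by linarith [hs.2]
        rw [hF]
        rw [norm_mul, norm_div, norm_pow, Real.norm_of_nonneg hΓ.le, norm_mul,
          Real.norm_of_nonneg (Real.rpow_nonneg h1 _),
          Real.norm_of_nonneg (Real.rpow_nonneg h2 _), Real.norm_eq_abs]
      rw [integral_congr_ae hnrm, MeasureTheory.integral_const_mul,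
        ← intervalIntegral.integral_of_le hu.le, beta_n hα0 hu]
      have hΓ2 : 0 < Real.Gamma (α * n + α + 1) := Real.Gamma_pos_of_pos (by positivity)
      rw [Real.rpow_add hu, mul_pow, Real.rpow_mul hu.le, Real.rpow_natCast]
      field_simp
    rw [funext heq]
    exact (gamma_summable hα0 hα0.le (by positivity)).mul_left _
  -- swap sum and integral
  have hswap : ∑' n, ∫ s in Ioc 0 u, F n s = ∫ s in Ioc 0 u, ∑' n, F n s :=
    integral_tsum_of_summable_integral_norm hFint hFnorm
  -- pointwise identification of the integrand
  have hpt : ∀ s ∈ Ioc (0:ℝ) u,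
      (u - s) ^ (α - 1) * mittagLeffler α (c * s ^ α) = ∑' n, F n s := by
    intro s hs
    rw [ML_comp hs.1.le, ← tsum_mul_left]
    apply tsum_congr
    intro n
    rw [hF]
    ring
  -- LHS as set integral
  have hLHS : ∫ s in (0:ℝ)..u, (u - s) ^ (α - 1) * mittagLeffler α (c * s ^ α)
      = ∑' n, ∫ s in Ioc 0 u, F n s := by
    rw [intervalIntegral.integral_of_le hu.le, hswap]
    apply setIntegral_congr_fun measurableSet_Ioc
    intro s hs
    exact hpt s hs
  rw [hLHS]
  -- compute the sum
  have hsummable : Summable (fun n : ℕ => c ^ n * u ^ (α * (n:ℝ)) / Real.Gamma (α * n + 1)) :=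
    Fser_summable hα0 hu.le
  have hshift : ∀ n : ℕ, ∫ s in Ioc 0 u, F n s
      = (Real.Gamma α / c) * (c ^ (n+1) * u ^ (α * ((n+1:ℕ):ℝ)) / Real.Gamma (α * ((n+1:ℕ):ℝ) + 1)) := by
    intro n
    rw [hFval n]
    rw [show α * ((n+1:ℕ):ℝ) = α * (n:ℝ) + α by push_cast; ring]
    rw [pow_succ]
    field_simp
  rw [funext hshift, tsum_mul_left]
  have htail : ∑' n : ℕ, (c ^ (n+1) * u ^ (α * ((n+1:ℕ):ℝ)) / Real.Gamma (α * ((n+1:ℕ):ℝ) + 1))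
      = mittagLeffler α (c * u ^ α) - 1 := by
    have h0 := Summable.tsum_eq_zero_add hsummable
    have hzero : c ^ 0 * u ^ (α * ((0:ℕ):ℝ)) / Real.Gamma (α * ((0:ℕ):ℝ) + 1) = 1 := by
      norm_num [Real.Gamma_one]
    rw [ML_comp hu.le, h0, hzero]
    ring
  rw [htail]
  have hαne : α ≠ 0 := hα0.ne'
  have h1αne : (1 - α) ≠ 0 := h1α.ne'
  have h1c : 1 / c = -((1 - α) / α) := by rw [hc, one_div_div, div_neg]
  calc Real.Gamma α / c * (mittagLeffler α (c * u ^ α) - 1)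
      = (1 / c) * (Real.Gamma α * (mittagLeffler α (c * u ^ α) - 1)) := by ring
    _ = -((1 - α) / α) * (Real.Gamma α * (mittagLeffler α (c * u ^ α) - 1)) := by rw [h1c]
    _ = Real.Gamma α * ((1 - α) / α) * (1 - mittagLeffler α (c * u ^ α)) := by ring

lemma ker_integrableOn' {α a t : ℝ} (hα0 : 0 < α) (hat : a < t) :
    IntegrableOn (fun τ : ℝ => (t - τ) ^ (α - 1)) (Ioc a t) := by
  have h1 : IntervalIntegrable (fun y : ℝ => y ^ (α - 1)) volume 0 (t - a) :=
    intervalIntegral.intervalIntegrable_rpow' (by linarith)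
  have h2 := (h1.comp_sub_left t).symm
  rw [sub_zero, sub_sub_cancel] at h2
  exact (intervalIntegrable_iff_integrableOn_Ioc_of_le hat.le).mp h2

lemma fubini_swap {α a t : ℝ} {g : ℝ → ℝ} {K : ℝ → ℝ} {M : ℝ} (hα1 : α < 1) (hat : a < t)
    (hK : Continuous K) (hM : ∀ u ∈ Icc (0:ℝ) (t - a), ‖K u‖ ≤ M)
    (hα0 : 0 < α) (hg : Measurable g) (hgi : IntegrableOn g (Ioc a t)) :
    ∫ τ in Ioc a t, (t - τ) ^ (α - 1) * ∫ x in Ioc a τ, g x * K (τ - x)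
      = ∫ x in Ioc a t, g x * ∫ τ in Ioc x t, (t - τ) ^ (α - 1) * K (τ - x) := by
  set G : ℝ × ℝ → ℝ := fun p => (t - p.1) ^ (α - 1) * (g p.2 * K (p.1 - p.2)) with hG
  set P : ℝ × ℝ → ℝ := fun p => {q : ℝ × ℝ | q.2 ≤ q.1}.indicator G p with hP
  set μ : Measure ℝ := volume.restrict (Ioc a t) with hμ
  have hGmeas : Measurable G := by
    apply Measurable.mul
    · fun_prop
    · exact ((hg.comp measurable_snd).mul
        (hK.measurable.comp (measurable_fst.sub measurable_snd)))
  have hPmeas : Measurable P :=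
    hGmeas.indicator (measurableSet_le measurable_snd measurable_fst)
  have hM0 : 0 ≤ M := le_trans (norm_nonneg _) (hM 0 ⟨le_rfl, by linarith⟩)
  have hPint : Integrable P (μ.prod μ) := by
    apply Integrable.mono
      (g := fun p : ℝ × ℝ => (t - p.1) ^ (α - 1) * (M * ‖g p.2‖)) ?_
      hPmeas.aestronglyMeasurable
    · rw [hμ, Measure.prod_restrict]
      filter_upwards [ae_restrict_mem (measurableSet_Ioc.prod measurableSet_Ioc)] with p hp
      obtain ⟨hp1, hp2⟩ := hp
      have ht1 : 0 ≤ t - p.1 := by have := hp1.2; linarith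
      have hrnn : 0 ≤ (t - p.1) ^ (α - 1) := Real.rpow_nonneg ht1 _
      rw [Real.norm_of_nonneg (mul_nonneg hrnn (by positivity))]
      simp only [hP, hG, Set.indicator_apply, Set.mem_setOf_eq]
      by_cases hle : p.2 ≤ p.1
      · rw [if_pos hle, norm_mul, norm_mul, Real.norm_of_nonneg hrnn]
        apply mul_le_mul_of_nonneg_left _ hrnn
        rw [mul_comm M _]
        apply mul_le_mul_of_nonneg_left _ (norm_nonneg _)
        apply hM
        constructor
        · linarith
        · have := hp1.2; have := hp2.1; linarith
      · rw [if_neg hle, norm_zero]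
        positivity
    · exact (ker_integrableOn' hα0 hat).mul_prod (hgi.norm.const_mul M)
  have hswap : ∫ τ, (∫ x, P (τ, x) ∂μ) ∂μ = ∫ x, (∫ τ, P (τ, x) ∂μ) ∂μ :=
    integral_integral_swap (f := fun τ x => P (τ, x)) hPint
  have hleft : ∫ τ in Ioc a t, (t - τ) ^ (α - 1) * ∫ x in Ioc a τ, g x * K (τ - x)
      = ∫ τ, (∫ x, P (τ, x) ∂μ) ∂μ := by
    rw [hμ]
    apply setIntegral_congr_fun measurableSet_Ioc
    intro τ hτ
    dsimp only
    have h1 : (fun x => P (τ, x))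
        = (Iic τ).indicator (fun x => (t - τ) ^ (α - 1) * (g x * K (τ - x))) := by
      funext x
      simp only [hP, hG, Set.indicator_apply, Set.mem_setOf_eq, Set.mem_Iic]
    rw [h1, setIntegral_indicator measurableSet_Iic,
      show Ioc a t ∩ Iic τ = Ioc a τ by rw [Set.Ioc_inter_Iic, min_eq_right hτ.2],
      MeasureTheory.integral_const_mul]
  have hright : ∫ x, (∫ τ, P (τ, x) ∂μ) ∂μ
      = ∫ x in Ioc a t, g x * ∫ τ in Ioc x t, (t - τ) ^ (α - 1) * K (τ - x) := by
    rw [hμ]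
    apply setIntegral_congr_fun measurableSet_Ioc
    intro x hx
    dsimp only
    have h1 : (fun τ => P (τ, x))
        = (Ici x).indicator (fun τ => g x * ((t - τ) ^ (α - 1) * K (τ - x))) := by
      funext τ
      simp only [hP, hG, Set.indicator_apply, Set.mem_setOf_eq, Set.mem_Ici]
      by_cases h : x ≤ τ
      · rw [if_pos h, if_pos h]; ring
      · rw [if_neg h, if_neg h]
    rw [h1, setIntegral_indicator measurableSet_Ici,
      show Ioc a t ∩ Ici x = Icc x t by
        ext τ
        simp only [Set.mem_inter_iff, Set.mem_Ioc, Set.mem_Ici, Set.mem_Icc]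
        constructor
        · rintro ⟨⟨_, h2⟩, h3⟩; exact ⟨h3, h2⟩
        · rintro ⟨h1', h2⟩; exact ⟨⟨lt_of_lt_of_le hx.1 h1', h2⟩, h1'⟩,
      MeasureTheory.integral_Icc_eq_integral_Ioc, MeasureTheory.integral_const_mul]
  rw [hleft, hswap, hright]

end AuxiliaryLemmas

/-- Newton–Leibniz formula in the AB model:
`^{AB}I^α(^{ABC}D^α f)(t) = f(t) - f(a)`. -/
theorem AB_newton_leibniz (α a b B : ℝ) (f : ℝ → ℝ)
    (hα0 : 0 < α) (hα1 : α < 1) (hB : 0 < B) (hab : a < b)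
    (hdiff : ∀ x ∈ Set.Icc a b, DifferentiableAt ℝ f x)
    (hf' : IntegrableOn (deriv f) (Set.Ioo a b)) :
    ∀ t ∈ Set.Ioo a b, ABI B a α (ABC B a α f) t = f t - f a := by
  intro t ht
  obtain ⟨hat, htb⟩ := ht
  have hαne : α ≠ 0 := hα0.ne'
  have h1α : (0:ℝ) < 1 - α := by linarith
  have hΓα : 0 < Real.Gamma α := Real.Gamma_pos_of_pos hα0
  set K : ℝ → ℝ := fun u => mittagLeffler α (-α / (1 - α) * u ^ α) with hKdef
  have hKcont : Continuous K :=
    (ML_continuous hα0).comp (continuous_const.mul (Real.continuous_rpow_const hα0.le))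
  obtain ⟨M, hM⟩ := (isCompact_Icc (a := (0:ℝ)) (b := t - a)).exists_bound_of_continuousOn
    hKcont.continuousOn
  have hABC : ∀ τ : ℝ, ABC B a α f τ
      = (B / (1 - α)) * ∫ x in a..τ, deriv f x * K (τ - x) := fun τ => rfl
  have hKI : ∀ u : ℝ, 0 < u → ∫ s in (0:ℝ)..u, (u - s) ^ (α - 1) * K s
      = Real.Gamma α * ((1 - α) / α) * (1 - K u) :=
    fun u hu => kernel_identity hα0 hα1 hu
  have hf'Ioc : IntegrableOn (deriv f) (Set.Ioc a t) := by
    rw [integrableOn_Ioc_iff_integrableOn_Ioo]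
    exact hf'.mono_set (fun y hy => ⟨hy.1, lt_trans hy.2 htb⟩)
  have hFTC : ∫ x in Set.Ioc a t, deriv f x = f t - f a := by
    rw [← intervalIntegral.integral_of_le hat.le]
    apply intervalIntegral.integral_eq_sub_of_hasDerivAt
    · intro x hx
      rw [Set.uIcc_of_le hat.le] at hx
      exact (hdiff x ⟨hx.1, le_trans hx.2 htb.le⟩).hasDerivAt
    · exact (intervalIntegrable_iff_integrableOn_Ioc_of_le hat.le).mpr hf'Ioc
  have hg1int : IntegrableOn (fun x => deriv f x * K (t - x)) (Set.Ioc a t) := by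
    apply Integrable.mono (hf'Ioc.norm.const_mul M)
      (((measurable_deriv f).mul
        (hKcont.measurable.comp (measurable_const.sub measurable_id))).aestronglyMeasurable)
    filter_upwards [ae_restrict_mem measurableSet_Ioc] with x hx
    show ‖deriv f x * K (t - x)‖ ≤ ‖M * ‖deriv f x‖‖
    rw [norm_mul]
    have h1 : 0 ≤ t - x := by linarith [hx.2]
    have h2 : t - x ≤ t - a := by linarith [hx.1]
    calc ‖deriv f x‖ * ‖K (t - x)‖ ≤ ‖deriv f x‖ * M :=
          mul_le_mul_of_nonneg_left (hM _ ⟨h1, h2⟩) (norm_nonneg _)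
      _ = M * ‖deriv f x‖ := mul_comm _ _
      _ ≤ ‖M * ‖deriv f x‖‖ := le_abs_self _
  have hg2int : IntegrableOn (fun x => deriv f x * (1 - K (t - x))) (Set.Ioc a t) := by
    have heq : (fun x => deriv f x * (1 - K (t - x)))
        = fun x => deriv f x - deriv f x * K (t - x) := by funext x; ring
    rw [heq]; exact hf'Ioc.sub hg1int
  have hcore : ∫ τ in Set.Ioc a t, (t - τ) ^ (α - 1) * ∫ x in Set.Ioc a τ, deriv f x * K (τ - x)
      = Real.Gamma α * ((1 - α) / α) * ∫ x in Set.Ioc a t, deriv f x * (1 - K (t - x)) := by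
    rw [fubini_swap hα1 hat hKcont hM hα0 (measurable_deriv f) hf'Ioc]
    rw [← MeasureTheory.integral_const_mul]
    rw [MeasureTheory.integral_Ioc_eq_integral_Ioo, MeasureTheory.integral_Ioc_eq_integral_Ioo]
    apply setIntegral_congr_fun measurableSet_Ioo
    intro x hx
    dsimp only
    have hxt : 0 < t - x := by linarith [hx.2]
    have hinner : ∫ τ in Set.Ioc x t, (t - τ) ^ (α - 1) * K (τ - x)
        = ∫ s in (0:ℝ)..(t - x), ((t - x) - s) ^ (α - 1) * K s := by
      rw [← intervalIntegral.integral_of_le (by linarith : x ≤ t)]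
      have h2 := intervalIntegral.integral_comp_add_right (a := (0:ℝ)) (b := t - x)
        (f := fun τ => (t - τ) ^ (α - 1) * K (τ - x)) x
      rw [zero_add, sub_add_cancel] at h2
      rw [← h2]
      apply intervalIntegral.integral_congr
      intro s hs
      dsimp only
      rw [add_sub_cancel_right, show t - (s + x) = t - x - s by ring]
    rw [hinner, hKI _ hxt]
    ring
  have hRL : ∫ τ in a..t, (t - τ) ^ (α - 1) * ABC B a α f τ
      = (B / (1 - α)) * (Real.Gamma α * ((1 - α) / α)
          * ∫ x in Set.Ioc a t, deriv f x * (1 - K (t - x))) := by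
    rw [intervalIntegral.integral_of_le hat.le, ← hcore, ← MeasureTheory.integral_const_mul]
    apply setIntegral_congr_fun measurableSet_Ioc
    intro τ hτ
    dsimp only
    rw [hABC τ, intervalIntegral.integral_of_le hτ.1.le]
    ring
  have hJ : (∫ x in Set.Ioc a t, deriv f x * K (t - x))
      + (∫ x in Set.Ioc a t, deriv f x * (1 - K (t - x))) = f t - f a := by
    rw [← MeasureTheory.integral_add hg1int hg2int, ← hFTC]
    apply setIntegral_congr_fun measurableSet_Ioc
    intro x hx
    dsimp only
    ring
  simp only [ABI, RL, if_neg hαne]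
  rw [hRL, hABC t, intervalIntegral.integral_of_le hat.le]
  set J1 := ∫ x in Set.Ioc a t, deriv f x * K (t - x) with hJ1
  set J2 := ∫ x in Set.Ioc a t, deriv f x * (1 - K (t - x)) with hJ2
  have hc1 : (1 - α) / B * (B / (1 - α) * J1) = J1 := by
    field_simp
  have hc2 : α / B * (1 / Real.Gamma α * (B / (1 - α)
      * (Real.Gamma α * ((1 - α) / α) * J2))) = J2 := by
    field_simp
  rw [hc1, hc2]
  exact hJ
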